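/- Let V be an n-dimensional Chebyshev subspace of C([-1,1]) with basis (v_1,...,v_n), let x^1,...,x^m be distinct points of [-1,1], let I ⊆ [-1,1] be an interval containing none of the points x^1,...,x^m, and let S ⊆ {1,...,m} with |S| = n. If for some z ∈ I the vector supported on S whose S-entries are M_S^{-1} b(z) is a minimizer of ‖a‖₁ subject to Ma = b(z), then for every x ∈ I the vector supported on S whose S-entries are M_S^{-1} b(x) is a minimizer of ‖a‖₁ subject to Ma = b(x). -/

import Mathlib

open Matrix

/-- An `n`-dimensional subspace `V` of `C(X, ℝ)` is a Chebyshev space if for all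
`n` distinct points and all prescribed values there is a unique interpolant in `V`. -/
def IsChebyshev {X : Type*} [TopologicalSpace X] (n : ℕ) (V : Submodule ℝ C(X, ℝ)) : Prop :=
  Module.finrank ℝ V = n ∧
    ∀ ξ : Fin n → X, Function.Injective ξ → ∀ γ : Fin n → ℝ,
      ∃! v : C(X, ℝ), v ∈ V ∧ ∀ i, v (ξ i) = γ i

/-- The vector of `ℝ^m` supported on the image of `σ : Fin n → Fin m`
whose entry at `σ l` equals `c l`. -/
def sparseExt {n m : ℕ} (σ : Fin n → Fin m) (c : Fin n → ℝ) : Fin m → ℝ :=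
  fun i => ∑ l, if i = σ l then c l else 0

lemma sparseExt_apply {n m : ℕ} {σ : Fin n → Fin m} (hσ : Function.Injective σ)
    (d : Fin n → ℝ) (l : Fin n) : sparseExt σ d (σ l) = d l := by
  simp [sparseExt, hσ.eq_iff]

lemma sparseExt_not_mem {n m : ℕ} {σ : Fin n → Fin m} (d : Fin n → ℝ)
    {i : Fin m} (hi : ∀ l, i ≠ σ l) : sparseExt σ d i = 0 :=
  Finset.sum_eq_zero fun l _ => if_neg (hi l)

lemma sum_abs_sparseExt {n m : ℕ} {σ : Fin n → Fin m} (hσ : Function.Injective σ)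
    (d : Fin n → ℝ) : ∑ i, |sparseExt σ d i| = ∑ l, |d l| := by
  classical
  have h1 : ∑ i ∈ Finset.univ.image σ, |sparseExt σ d i| = ∑ i, |sparseExt σ d i| :=
    Finset.sum_subset (Finset.subset_univ _) (fun i _ hi => by
      rw [sparseExt_not_mem d, abs_zero]
      intro l hl; exact hi (Finset.mem_image.2 ⟨l, Finset.mem_univ l, hl.symm⟩))
  rw [← h1, Finset.sum_image (fun a _ b _ h => hσ h)]
  simp [sparseExt_apply hσ]

lemma mulVec_sparseExt {n m : ℕ} (σ : Fin n → Fin m)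
    (M : Matrix (Fin n) (Fin m) ℝ) (d : Fin n → ℝ) :
    M.mulVec (sparseExt σ d) = fun j => ∑ l, M j (σ l) * d l := by
  funext j
  simp only [Matrix.mulVec, dotProduct, sparseExt, Finset.mul_sum, mul_ite, mul_zero]
  rw [Finset.sum_comm]
  simp


/-- if on an interval `I ⊆ [-1,1]` containing none of the points
`x¹, …, xᵐ`, the vector supported on `S` with values `M_S⁻¹ b(z)` is an `ℓ¹`-minimizer
subject to `Ma = b(z)` for some `z ∈ I`, then for every `x ∈ I` the vector supported
on `S` with values `M_S⁻¹ b(x)` is an `ℓ¹`-minimizer subject to `Ma = b(x)`. -/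
theorem l1_minimizer_support_propagates_on_interval
    (n m : ℕ) (V : Submodule ℝ C(Set.Icc (-1 : ℝ) 1, ℝ))
    (hCheb : IsChebyshev n V)
    (v : Fin n → C(Set.Icc (-1 : ℝ) 1, ℝ))
    (hv_mem : ∀ j, v j ∈ V)
    (hv_indep : LinearIndependent ℝ v)
    (hv_span : Submodule.span ℝ (Set.range v) = V)
    (xpt : Fin m → Set.Icc (-1 : ℝ) 1) (hxpt : Function.Injective xpt)
    (I : Set ℝ) (hI : I ⊆ Set.Icc (-1 : ℝ) 1) (hIconn : I.OrdConnected)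
    (hIx : ∀ i, (xpt i : ℝ) ∉ I)
    (σ : Fin n → Fin m) (hσ : Function.Injective σ)
    (M : Matrix (Fin n) (Fin m) ℝ) (hM : ∀ j i, M j i = v j (xpt i))
    (MS : Matrix (Fin n) (Fin n) ℝ) (hMS : ∀ j l, MS j l = v j (xpt (σ l)))
    (z : ℝ) (hzI : z ∈ I)
    (hz_min : ∀ a : Fin m → ℝ, M.mulVec a = (fun j => v j ⟨z, hI hzI⟩) →
      ∑ i, |sparseExt σ (MS⁻¹.mulVec fun j => v j ⟨z, hI hzI⟩) i| ≤ ∑ i, |a i|) :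
    ∀ x : ℝ, ∀ hxI : x ∈ I,
      M.mulVec (sparseExt σ (MS⁻¹.mulVec fun j => v j ⟨x, hI hxI⟩)) =
          (fun j => v j ⟨x, hI hxI⟩) ∧
        ∀ a : Fin m → ℝ, M.mulVec a = (fun j => v j ⟨x, hI hxI⟩) →
          ∑ i, |sparseExt σ (MS⁻¹.mulVec fun j => v j ⟨x, hI hxI⟩) i| ≤ ∑ i, |a i| := by
  classical
  obtain ⟨-, hU⟩ := hCheb
  -- trivial case: n = 0
  rcases isEmpty_or_nonempty (Fin n) with hemp | hne
  · intro x hxI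
    constructor
    · funext j; exact (hemp.false j).elim
    · intro a _
      have h0 : ∀ i, sparseExt σ (MS⁻¹.mulVec fun j => v j ⟨x, hI hxI⟩) i = 0 := fun i => by
        simp [sparseExt, Finset.univ_eq_empty]
      simp only [h0, abs_zero, Finset.sum_const_zero]
      positivity
  -- coefficient vanishing lemma (Haar property)
  have hvanish : ∀ (c : Fin n → ℝ) (ξ : Fin n → Set.Icc (-1:ℝ) 1), Function.Injective ξ →
      (∀ l, ∑ j, c j * v j (ξ l) = 0) → c = 0 := by
    intro c ξ hξ h0
    obtain ⟨w, -, huniq⟩ := hU ξ hξ 0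
    have h1 : (∑ j, c j • v j) = w :=
      huniq _ ⟨Submodule.sum_mem _ fun j _ => Submodule.smul_mem _ _ (hv_mem j),
        fun l => by simpa using h0 l⟩
    have h2 : (0 : C(Set.Icc (-1:ℝ) 1, ℝ)) = w := huniq _ ⟨Submodule.zero_mem _, fun l => by simp⟩
    have hu : (∑ j, c j • v j) = 0 := h1.trans h2.symm
    have := linearIndependent_iff'.mp hv_indep Finset.univ c (by simpa using hu)
    exact funext fun j => this j (Finset.mem_univ j)
  -- MS is invertible
  have hMSker : ∀ c : Fin n → ℝ, MS.vecMul c = 0 → c = 0 := by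
    intro c hc
    refine hvanish c (fun l => xpt (σ l)) (hxpt.comp hσ) fun l => ?_
    have := congrFun hc l
    simpa [Matrix.vecMul, dotProduct, hMS] using this
  have hMSunit : IsUnit MS := by
    rw [← Matrix.vecMul_injective_iff_isUnit]
    intro c c' h
    have h' : Matrix.vecMul c MS = Matrix.vecMul c' MS := h
    have h1 : MS.vecMul (c - c') = 0 := by
      rw [Matrix.sub_vecMul]
      change MS.vecMul c - MS.vecMul c' = 0
      rw [h', sub_self]
    exact sub_eq_zero.mp (hMSker _ h1)
  have hdet : IsUnit MS.det := (Matrix.isUnit_iff_isUnit_det MS).mp hMSunit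
  have hMSinv : MS * MS⁻¹ = 1 := Matrix.mul_nonsing_inv MS hdet
  have hMSinv' : MS⁻¹ * MS = 1 := Matrix.nonsing_inv_mul MS hdet
  have hMσ : ∀ j l, M j (σ l) = MS j l := fun j l => by rw [hM, hMS]
  -- solving at the interpolation points
  have hcc_pt : ∀ l : Fin n, MS⁻¹.mulVec (fun j => v j (xpt (σ l))) = Pi.single l 1 := by
    intro l
    have hcol : (fun j => v j (xpt (σ l))) = MS.mulVec (Pi.single l 1) := by
      funext j; rw [Matrix.mulVec_single]; simp [hMS]
    rw [hcol, Matrix.mulVec_mulVec, hMSinv', Matrix.one_mulVec]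
  -- the coefficient functions do not vanish on I
  have hcc_ne : ∀ (l : Fin n) (x : ℝ) (hx : x ∈ I),
      MS⁻¹.mulVec (fun j => v j ⟨x, hI hx⟩) l ≠ 0 := by
    intro l x hx h0
    have hxne : ∀ i, (⟨x, hI hx⟩ : Set.Icc (-1:ℝ) 1) ≠ xpt i := by
      intro i h
      exact hIx i (by rw [← h]; exact hx)
    set ξ : Fin n → Set.Icc (-1:ℝ) 1 :=
      fun l'' => if l'' = l then ⟨x, hI hx⟩ else xpt (σ l'') with hξ
    have hξinj : Function.Injective ξ := by
      intro a b hab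
      by_cases ha : a = l <;> by_cases hb : b = l
      · rw [ha, hb]
      · exfalso
        rw [hξ] at hab; simp only [if_pos ha, if_neg hb] at hab
        exact hxne _ hab
      · exfalso
        rw [hξ] at hab; simp only [if_pos hb, if_neg ha] at hab
        exact hxne _ hab.symm
      · rw [hξ] at hab; simp only [if_neg ha, if_neg hb] at hab
        exact hσ (hxpt hab)
    have hrow : (fun j => MS⁻¹ l j) = 0 := by
      refine hvanish _ ξ hξinj fun l'' => ?_
      have hform : ∀ p : Set.Icc (-1:ℝ) 1,
          (MS⁻¹.mulVec (fun j => v j p)) l = ∑ j, MS⁻¹ l j * v j p := fun p => by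
        simp [Matrix.mulVec, dotProduct]
      rw [← hform]
      by_cases h : l'' = l
      · subst h
        rw [hξ]; simp only [if_pos rfl]
        exact h0
      · rw [hξ]; simp only [if_neg h]
        rw [hcc_pt l'']
        exact Pi.single_eq_of_ne (fun hh => h hh.symm) 1
    have hzero : ∀ j, MS⁻¹ l j = 0 := fun j => congrFun hrow j
    have h1 : MS⁻¹.mulVec (fun j => v j (xpt (σ l))) l = 1 := by
      rw [hcc_pt l]; simp
    have h2 : MS⁻¹.mulVec (fun j => v j (xpt (σ l))) l = 0 := by
      simp [Matrix.mulVec, dotProduct, hzero]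
    rw [h1] at h2
    exact one_ne_zero h2
  -- sign constancy on I
  have hsign : ∀ (l : Fin n) (x : ℝ) (hx : x ∈ I),
      0 < MS⁻¹.mulVec (fun j => v j ⟨x, hI hx⟩) l * MS⁻¹.mulVec (fun j => v j ⟨z, hI hzI⟩) l := by
    intro l x hx
    rcases lt_trichotomy (MS⁻¹.mulVec (fun j => v j ⟨x, hI hx⟩) l *
        MS⁻¹.mulVec (fun j => v j ⟨z, hI hzI⟩) l) 0 with hlt | heq | hgt
    · exfalso
      set g : ℝ → ℝ :=
        fun t => MS⁻¹.mulVec (fun j => v j (Set.projIcc (-1:ℝ) 1 (by norm_num) t)) l with hg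
      have hgc : Continuous g := by
        have hc1 : Continuous fun p : Set.Icc (-1:ℝ) 1 => MS⁻¹.mulVec (fun j => v j p) l := by
          simp only [Matrix.mulVec, dotProduct]
          exact continuous_finset_sum _ fun j _ => continuous_const.mul (v j).continuous
        exact hc1.comp continuous_projIcc
      have hgz : g z = MS⁻¹.mulVec (fun j => v j ⟨z, hI hzI⟩) l := by
        rw [hg]; simp only []; rw [Set.projIcc_of_mem _ (hI hzI)]
      have hgx : g x = MS⁻¹.mulVec (fun j => v j ⟨x, hI hx⟩) l := by
        rw [hg]; simp only []; rw [Set.projIcc_of_mem _ (hI hx)]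
      have h0mem : (0:ℝ) ∈ Set.uIcc (g x) (g z) := by
        rw [hgx, hgz, Set.mem_uIcc]
        rcases mul_neg_iff.mp hlt with ⟨h1, h2⟩ | ⟨h1, h2⟩
        · right; exact ⟨le_of_lt h2, le_of_lt h1⟩
        · left; exact ⟨le_of_lt h1, le_of_lt h2⟩
      obtain ⟨y, hy, hgy⟩ := intermediate_value_uIcc hgc.continuousOn h0mem
      have hyI : y ∈ I := hIconn.uIcc_subset hx hzI hy
      apply hcc_ne l y hyI
      rw [← hgy, hg]; simp only []; rw [Set.projIcc_of_mem _ (hI hyI)]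
    · exact absurd heq (mul_ne_zero (hcc_ne l x hx) (hcc_ne l z hzI))
    · exact hgt
  -- the sign vector
  set ε : Fin n → ℝ :=
    fun l => if 0 < MS⁻¹.mulVec (fun j => v j ⟨z, hI hzI⟩) l then 1 else -1 with hε
  have hε_abs : ∀ l, |ε l| = 1 := fun l => by rw [hε]; simp only []; split <;> simp
  have hε_mul : ∀ (l : Fin n) (x : ℝ) (hx : x ∈ I),
      ε l * MS⁻¹.mulVec (fun j => v j ⟨x, hI hx⟩) l = |MS⁻¹.mulVec (fun j => v j ⟨x, hI hx⟩) l| := by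
    intro l x hx
    have hp := hsign l x hx
    by_cases h : 0 < MS⁻¹.mulVec (fun j => v j ⟨z, hI hzI⟩) l
    · have hxp : 0 < MS⁻¹.mulVec (fun j => v j ⟨x, hI hx⟩) l := by nlinarith
      rw [hε]; simp only [if_pos h]
      rw [abs_of_pos hxp, one_mul]
    · have hzn : MS⁻¹.mulVec (fun j => v j ⟨z, hI hzI⟩) l < 0 :=
        lt_of_le_of_ne (not_lt.mp h) (hcc_ne l z hzI)
      have hxn : MS⁻¹.mulVec (fun j => v j ⟨x, hI hx⟩) l < 0 := by nlinarith
      rw [hε]; simp only [if_neg h]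
      rw [abs_of_neg hxn, neg_one_mul]
  -- the dual certificate
  set W : Fin m → ℝ := Matrix.vecMul (Matrix.vecMul ε MS⁻¹) M with hW
  have hWi : ∀ i, W i = ε ⬝ᵥ (MS⁻¹.mulVec (fun j => M j i)) := by
    intro i
    rw [Matrix.dotProduct_mulVec, hW]
    simp [Matrix.vecMul, dotProduct]
  -- dual feasibility
  have hfeas : ∀ i, |W i| ≤ 1 := by
    intro i
    by_cases hir : ∃ l, i = σ l
    · obtain ⟨l, rfl⟩ := hir
      have hcol : (fun j => M j (σ l)) = MS.mulVec (Pi.single l 1) := by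
        funext j; rw [Matrix.mulVec_single]; simp [hMσ]
      rw [hWi, hcol, Matrix.mulVec_mulVec, hMSinv', Matrix.one_mulVec]
      rw [dotProduct_single, mul_one]
      exact le_of_eq (hε_abs l)
    · push_neg at hir
      set d : Fin n → ℝ := MS⁻¹.mulVec (fun j => M j i) with hd
      set cz : Fin n → ℝ := MS⁻¹.mulVec (fun j => v j ⟨z, hI hzI⟩) with hcz
      set t0 : ℝ := Finset.univ.inf' Finset.univ_nonempty (fun l => |cz l| / (|d l| + 1)) with ht0
      have hczne : ∀ l, cz l ≠ 0 := fun l => hcc_ne l z hzI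
      have ht0pos : 0 < t0 := by
        rw [ht0, Finset.lt_inf'_iff]
        intro l _
        exact div_pos (abs_pos.mpr (hczne l)) (by positivity)
      have key : ∀ t : ℝ, |t| = t0 → t * (ε ⬝ᵥ d) ≤ |t| := by
        intro t ht
        have hsmall : ∀ l, |t * d l| < |cz l| := by
          intro l
          calc |t * d l| = t0 * |d l| := by rw [abs_mul, ht]
          _ ≤ (|cz l| / (|d l| + 1)) * |d l| := by
              apply mul_le_mul_of_nonneg_right _ (abs_nonneg _)
              rw [ht0]
              exact Finset.inf'_le _ (Finset.mem_univ l)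
          _ < |cz l| := by
              rw [div_mul_eq_mul_div, div_lt_iff₀ (by positivity)]
              nlinarith [abs_nonneg (d l), abs_pos.mpr (hczne l)]
        have hterm : ∀ l, |cz l - t * d l| = ε l * (cz l - t * d l) := by
          intro l
          have h1 : ε l * cz l = |cz l| := hε_mul l z hzI
          have hle := le_abs_self (t * d l)
          have hge := neg_abs_le (t * d l)
          have hs := hsmall l
          by_cases h : 0 < MS⁻¹.mulVec (fun j => v j ⟨z, hI hzI⟩) l
          · have hεl : ε l = 1 := by rw [hε]; exact if_pos h
            have hczpos : 0 < cz l := h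
            have : 0 < cz l - t * d l := by
              have := abs_of_pos hczpos
              linarith
            rw [abs_of_pos this, hεl, one_mul]
          · have hεl : ε l = -1 := by rw [hε]; exact if_neg h
            have hczneg : cz l < 0 := lt_of_le_of_ne (not_lt.mp h) (hczne l)
            have : cz l - t * d l < 0 := by
              have := abs_of_neg hczneg
              linarith
            rw [abs_of_neg this, hεl, neg_one_mul]
        set a : Fin m → ℝ :=
          fun i' => sparseExt σ (fun l => cz l - t * d l) i' + t * (if i' = i then 1 else 0)
          with ha
        -- feasibility of a
        have hMScz : MS.mulVec cz = fun j => v j ⟨z, hI hzI⟩ := by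
          rw [hcz, Matrix.mulVec_mulVec, hMSinv, Matrix.one_mulVec]
        have hMSd : MS.mulVec d = fun j => M j i := by
          rw [hd, Matrix.mulVec_mulVec, hMSinv, Matrix.one_mulVec]
        have hMa : M.mulVec a = fun j => v j ⟨z, hI hzI⟩ := by
          have ha' : a = (sparseExt σ (fun l => cz l - t * d l)) +
              t • (fun i' => if i' = i then (1:ℝ) else 0) := by
            funext i'
            simp [ha, smul_eq_mul]
          rw [ha', Matrix.mulVec_add, Matrix.mulVec_smul, mulVec_sparseExt]
          have h1 : M.mulVec (fun i' => if i' = i then (1:ℝ) else 0) = fun j => M j i := by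
            funext j
            simp [Matrix.mulVec, dotProduct]
          rw [h1]
          funext j
          have e1 : ∑ l, MS j l * cz l = v j ⟨z, hI hzI⟩ := by
            have := congrFun hMScz j
            simpa [Matrix.mulVec, dotProduct] using this
          have e2 : ∑ l, MS j l * d l = M j i := by
            have := congrFun hMSd j
            simpa [Matrix.mulVec, dotProduct] using this
          have e3 : ∑ l, M j (σ l) * (cz l - t * d l)
              = (∑ l, MS j l * cz l) - t * ∑ l, MS j l * d l := by
            simp only [hMσ, mul_sub, Finset.sum_sub_distrib, Finset.mul_sum]
            congr 1
            exact Finset.sum_congr rfl fun l _ => by ring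
          show (∑ l, M j (σ l) * (cz l - t * d l)) + t * M j i = v j ⟨z, hI hzI⟩
          rw [e3, e1, e2]
          ring
        -- the ℓ¹ norm of a
        have hsum : ∑ i', |a i'| = (∑ l, |cz l|) - t * (ε ⬝ᵥ d) + |t| := by
          have hpt : ∀ i', |a i'| =
              |sparseExt σ (fun l => cz l - t * d l) i'| + |t * (if i' = i then (1:ℝ) else 0)| := by
            intro i'
            by_cases h : i' = i
            · subst h
              rw [ha]; simp only [if_pos rfl]
              rw [sparseExt_not_mem _ hir]
              simp
            · rw [ha]; simp only [if_neg h, mul_zero, add_zero, abs_zero, add_zero]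
          rw [Finset.sum_congr rfl (fun i' _ => hpt i'), Finset.sum_add_distrib,
            sum_abs_sparseExt hσ]
          have h2 : ∑ i', |t * (if i' = i then (1:ℝ) else 0)| = |t| := by
            rw [Finset.sum_eq_single i]
            · simp
            · intro b _ hb; simp [hb]
            · intro hh; exact absurd (Finset.mem_univ i) hh
          rw [h2]
          have h3 : ∑ l, |cz l - t * d l| = (∑ l, |cz l|) - t * (ε ⬝ᵥ d) := by
            rw [Finset.sum_congr rfl fun l _ => hterm l]
            have : ∀ l, ε l * (cz l - t * d l) = ε l * cz l - t * (ε l * d l) := fun l => by ring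
            rw [Finset.sum_congr rfl fun l _ => this l, Finset.sum_sub_distrib]
            congr 1
            · exact Finset.sum_congr rfl fun l _ => hε_mul l z hzI
            · rw [dotProduct, Finset.mul_sum]
          rw [h3]
        have hmin := hz_min a hMa
        rw [sum_abs_sparseExt hσ] at hmin
        rw [hsum] at hmin
        linarith
      have k1 := key t0 (abs_of_pos ht0pos)
      have k2 := key (-t0) (by rw [abs_neg, abs_of_pos ht0pos])
      rw [abs_of_pos ht0pos] at k1
      rw [abs_neg, abs_of_pos ht0pos] at k2
      rw [hWi]
      rw [← hd]
      rw [abs_le]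
      constructor
      · nlinarith
      · nlinarith
  -- conclusion
  intro x hxI
  constructor
  · rw [mulVec_sparseExt]
    funext j
    have e0 : MS.mulVec (MS⁻¹.mulVec (fun j => v j ⟨x, hI hxI⟩)) = fun j => v j ⟨x, hI hxI⟩ := by
      rw [Matrix.mulVec_mulVec, hMSinv, Matrix.one_mulVec]
    have := congrFun e0 j
    simp only [Matrix.mulVec, dotProduct] at this ⊢
    rw [← this]
    exact Finset.sum_congr rfl fun l _ => by rw [hMσ]
  · intro a hMa
    have h1 : ∑ i, W i * a i = ∑ l, |MS⁻¹.mulVec (fun j => v j ⟨x, hI hxI⟩) l| := by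
      have e1 : ∑ i, W i * a i = (Matrix.vecMul ε MS⁻¹) ⬝ᵥ (M.mulVec a) := by
        rw [Matrix.dotProduct_mulVec, hW]
        rfl
      rw [e1, hMa, ← Matrix.dotProduct_mulVec]
      exact Finset.sum_congr rfl fun l _ => hε_mul l x hxI
    calc ∑ i, |sparseExt σ (MS⁻¹.mulVec fun j => v j ⟨x, hI hxI⟩) i|
        = ∑ l, |MS⁻¹.mulVec (fun j => v j ⟨x, hI hxI⟩) l| := sum_abs_sparseExt hσ _
      _ = ∑ i, W i * a i := h1.symm
      _ ≤ ∑ i, |a i| := by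
          apply Finset.sum_le_sum
          intro i _
          calc W i * a i ≤ |W i * a i| := le_abs_self _
            _ = |W i| * |a i| := abs_mul _ _
            _ ≤ 1 * |a i| := mul_le_mul_of_nonneg_right (hfeas i) (abs_nonneg _)
            _ = |a i| := one_mul _
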